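/- Let Γ be a nonempty finite subset of (ℤ_{≥0})ⁿ and α ∈ (ℝ_{≥0})ⁿ. Then the following are equivalent: (1) for every weight vector ν ∈ (ℝ_{>0})ⁿ, ν·α ≥ min_{γ∈Γ} ν·γ; (2) α ∈ conv(Γ) + (ℝ_{≥0})ⁿ, i.e. α lies in the Minkowski sum of the convex hull of Γ with the nonnegative orthant. -/

import Mathlib

open Pointwise

/-- For a nonempty finite set `Γ ⊆ (ℤ_{≥0})ⁿ` and `α ∈ (ℝ_{≥0})ⁿ`, the point `α` is not
below the Newton diagram of `Γ` (i.e. `ν·α ≥ min_{γ∈Γ} ν·γ` for every positive weight `ν`)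
if and only if `α` lies in the Newton polyhedron `conv(Γ) + (ℝ_{≥0})ⁿ`. -/
theorem not_below_diagram_iff_mem_newton_polyhedron {n : ℕ}
    (Γ : Finset (Fin n → ℕ)) (hΓ : Γ.Nonempty) (α : Fin n → ℝ) (hα : ∀ i, 0 ≤ α i) :
    (∀ ν : Fin n → ℝ, (∀ i, 0 < ν i) →
        ∃ γ ∈ Γ, ∑ i, ν i * (γ i : ℝ) ≤ ∑ i, ν i * α i) ↔
      α ∈ convexHull ℝ ((fun γ : Fin n → ℕ => fun i => (γ i : ℝ)) '' (Γ : Set (Fin n → ℕ)))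
            + {x : Fin n → ℝ | ∀ i, 0 ≤ x i} := by
  set c : (Fin n → ℕ) → (Fin n → ℝ) := fun γ => fun i => (γ i : ℝ) with hc
  set H := convexHull ℝ (c '' (Γ : Set (Fin n → ℕ))) with hH
  set Q : Set (Fin n → ℝ) := {x | ∀ i, 0 ≤ x i} with hQ
  have hQpi : Q = Set.univ.pi fun _ : Fin n => Set.Ici (0 : ℝ) := by
    ext x; simp [hQ, Set.mem_pi, Pi.le_def]
  have hQconv : Convex ℝ Q := by
    rw [hQpi]; exact convex_pi fun i _ => convex_Ici 0
  have hQclosed : IsClosed Q := by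
    rw [hQpi]; exact isClosed_set_pi fun i _ => isClosed_Ici
  constructor
  · -- hard direction: contrapositive via Hahn-Banach
    intro h1
    by_contra hmem
    have hconv : Convex ℝ (H + Q) := (convex_convexHull ℝ _).add hQconv
    have hHcompact : IsCompact H :=
      Set.Finite.isCompact_convexHull (𝕜 := ℝ) ((Γ.finite_toSet).image _)
    have hclosed : IsClosed (H + Q) := hQclosed.add_left_of_isCompact hHcompact
    obtain ⟨f, u, hfu, hub⟩ := geometric_hahn_banach_point_closed hconv hclosed hmem
    set e : Fin n → (Fin n → ℝ) := fun i => fun j => if i = j then 1 else 0 with he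
    have hmemS : ∀ γ ∈ Γ, c γ ∈ H + Q := by
      intro γ hγ
      exact ⟨c γ, subset_convexHull ℝ _ ⟨γ, hγ, rfl⟩, 0, fun i => le_refl 0, by simp⟩
    have hflin : ∀ x : Fin n → ℝ, f x = ∑ i, x i * f (e i) := by
      intro x
      conv_lhs => rw [pi_eq_sum_univ x]
      simp [map_sum, map_smul, smul_eq_mul, he]
    obtain ⟨γ₀, hγ₀⟩ := hΓ
    have hu0 : u < f (c γ₀) := hub _ (hmemS γ₀ hγ₀)
    have hfnn : ∀ i, 0 ≤ f (e i) := by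
      intro i
      by_contra hneg
      push_neg at hneg
      have key : ∀ t : ℝ, 0 ≤ t → u < f (c γ₀) + t * f (e i) := by
        intro t ht
        have hmem2 : c γ₀ + t • e i ∈ H + Q := by
          refine ⟨c γ₀, subset_convexHull ℝ _ ⟨γ₀, hγ₀, rfl⟩, t • e i, ?_, rfl⟩
          intro j
          simp only [Pi.smul_apply, smul_eq_mul, he]
          rcases eq_or_ne i j with rfl | hij
          · simp [ht]
          · simp [hij]
        have := hub _ hmem2
        simpa [map_add, map_smul, smul_eq_mul] using this
      have ht0 : 0 < (u - f (c γ₀) - 1) / f (e i) :=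
        div_pos_of_neg_of_neg (by linarith) hneg
      have h2 := key _ ht0.le
      rw [div_mul_cancel₀ _ (ne_of_lt hneg)] at h2
      linarith
    have hαsum : 0 ≤ ∑ i, α i := Finset.sum_nonneg fun i _ => hα i
    set ε : ℝ := (u - f α) / (∑ i, α i + 1) with hε
    have hεpos : 0 < ε := div_pos (by linarith) (by linarith)
    set ν : Fin n → ℝ := fun i => f (e i) + ε with hν
    have hνpos : ∀ i, 0 < ν i := fun i => by
      have := hfnn i; simp only [hν]; positivity
    obtain ⟨γ, hγ, hle⟩ := h1 ν hνpos
    have hexp : ∀ x : Fin n → ℝ, ∑ i, ν i * x i = f x + ε * ∑ i, x i := by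
      intro x
      rw [hflin x, Finset.mul_sum, ← Finset.sum_add_distrib]
      congr 1; ext i; simp [hν]; ring
    have hle' : f (c γ) + ε * ∑ i, (c γ) i ≤ f α + ε * ∑ i, α i := by
      have := hle; rw [hexp, hexp] at this; exact this
    have h3 : u < f (c γ) := hub _ (hmemS γ hγ)
    have h4 : 0 ≤ ∑ i, c γ i := Finset.sum_nonneg fun i _ => Nat.cast_nonneg _
    have h6 : ε * (∑ i, α i + 1) = u - f α := div_mul_cancel₀ _ (by linarith)
    nlinarith
  · -- easy direction
    rintro ⟨β, hβ, r, hr, rfl⟩ ν hν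
    set g : (Fin n → ℝ) → ℝ := fun x => ∑ i, ν i * x i with hg
    have hglin : IsLinearMap ℝ g := by
      constructor
      · intro x y; simp [hg, mul_add, Finset.sum_add_distrib]
      · intro a x; simp [hg, Finset.mul_sum, mul_left_comm, mul_assoc, mul_comm]
    obtain ⟨γ₀, hγ₀, hmin⟩ := Γ.exists_mem_eq_inf' hΓ (fun γ => g (c γ))
    refine ⟨γ₀, hγ₀, ?_⟩
    have hβ' : Γ.inf' hΓ (fun γ => g (c γ)) ≤ g β := by
      have hsub : c '' (Γ : Set (Fin n → ℕ)) ⊆ {x | Γ.inf' hΓ (fun γ => g (c γ)) ≤ g x} := by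
        rintro _ ⟨γ, hγ, rfl⟩
        exact Finset.inf'_le (fun γ => g (c γ)) hγ
      have hcvx : Convex ℝ {x | Γ.inf' hΓ (fun γ => g (c γ)) ≤ g x} :=
        convex_halfSpace_ge hglin _
      exact convexHull_min hsub hcvx hβ
    have hgr : 0 ≤ g r := Finset.sum_nonneg fun i _ => mul_nonneg (hν i).le (hr i)
    have hadd : g (β + r) = g β + g r := hglin.map_add β r
    calc ∑ i, ν i * ((γ₀ i : ℕ) : ℝ) = g (c γ₀) := rfl
      _ = Γ.inf' hΓ (fun γ => g (c γ)) := hmin.symm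
      _ ≤ g β := hβ'
      _ ≤ g (β + r) := by rw [hadd]; linarith
      _ = ∑ i, ν i * (β + r) i := rfl
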